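/- arXiv:1412.4456 — 2 statements merged into one kernel-verified Lean document; each statement's English description precedes it below -/
import Mathlib

section
/- Let N be a finite set, S ⊆ N a nonempty finite subset, and C : Finset N → ℝ a function. Define the Shapley cost share of i ∈ S as φ_i(C,S) = (1/|S|!) · Σ_{π ∈ Π(S)} [C(S_{i,π} ∪ {i}) − C(S_{i,π})], where Π(S) is the set of bijections from S to {1,…,|S|} and S_{i,π} = {j ∈ S : π(j) < π(i)}. Then Σ_{i ∈ S} φ_i(C,S) = C(S) − C(∅); in particular, if C(∅) = 0 the Shapley cost shares are budget-balanced: Σ_{i ∈ S} φ_i(C,S) = C(S). -/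
open Finset

/-- The set of players preceding `i` in the order induced by the bijection
`π : S ≃ Fin |S|`, i.e. `S_{i,π} = {j ∈ S : π(j) < π(i)}`. -/
def preSet {N : Type*} [DecidableEq N] (S : Finset N)
    (π : {x // x ∈ S} ≃ Fin S.card) (i : {x // x ∈ S}) : Finset N :=
  (S.attach.filter (fun j => π j < π i)).image Subtype.val

/-- The Shapley cost share `φ_i(C,S)` of player `i` at a resource with cost
function `C` used by the player set `S`. -/
noncomputable def shapley {N : Type*} [DecidableEq N]
    (C : Finset N → ℝ) (S : Finset N) (i : N) : ℝ :=
  if hi : i ∈ S then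
    (1 / (Nat.factorial S.card : ℝ)) *
      ∑ π : {x // x ∈ S} ≃ Fin S.card,
        (C (preSet S π ⟨i, hi⟩ ∪ {i}) - C (preSet S π ⟨i, hi⟩))
  else 0

/-- The Shapley cost shares sum to `C(S) - C(∅)`; in particular, if `C(∅) = 0`
they are budget-balanced. -/
theorem shapley_budget_balanced {N : Type*} [DecidableEq N] [Fintype N]
    (S : Finset N) (hS : S.Nonempty) (C : Finset N → ℝ) :
    (∑ i ∈ S, shapley C S i = C S - C ∅) ∧
      (C ∅ = 0 → ∑ i ∈ S, shapley C S i = C S) := by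
  have key : ∑ i ∈ S, shapley C S i = C S - C ∅ := by
    have h1 : ∑ i ∈ S, shapley C S i = ∑ i ∈ S.attach, shapley C S i.val :=
      (Finset.sum_attach S _).symm
    have h2 : ∀ i : {x // x ∈ S}, shapley C S i.val
        = (1 / (Nat.factorial S.card : ℝ)) *
          ∑ π : {x // x ∈ S} ≃ Fin S.card,
            (C (preSet S π i ∪ {i.val}) - C (preSet S π i)) := by
      intro i
      simp [shapley, i.2]
    rw [h1]
    simp_rw [h2]
    rw [← Finset.mul_sum, Finset.sum_comm]
    have h3 : ∀ π : {x // x ∈ S} ≃ Fin S.card,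
        ∑ i ∈ S.attach, (C (preSet S π i ∪ {i.val}) - C (preSet S π i))
          = C S - C ∅ := by
      intro π
      classical
      set P : ℕ → Finset N :=
        fun k => (S.attach.filter (fun j => (π j : ℕ) < k)).image Subtype.val with hP
      have hpre : ∀ i, preSet S π i = P ((π i : ℕ)) := by
        intro i
        simp only [preSet, hP]
        congr 1
      have hunion : ∀ i : {x // x ∈ S}, preSet S π i ∪ {i.val} = P ((π i : ℕ) + 1) := by
        intro i
        rw [hpre]
        ext x
        simp only [hP, Finset.mem_union, Finset.mem_singleton, Finset.mem_image,
          Finset.mem_filter, Finset.mem_attach, true_and]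
        constructor
        · rintro (⟨j, hj, rfl⟩ | rfl)
          · exact ⟨j, by omega, rfl⟩
          · exact ⟨i, by omega, rfl⟩
        · rintro ⟨j, hj, rfl⟩
          rcases Nat.lt_succ_iff_lt_or_eq.mp hj with h | h
          · exact Or.inl ⟨j, h, rfl⟩
          · right
            have : π j = π i := Fin.ext h
            rw [π.injective this]
      calc ∑ i ∈ S.attach, (C (preSet S π i ∪ {i.val}) - C (preSet S π i))
          = ∑ i : {x // x ∈ S}, (C (P ((π i : ℕ) + 1)) - C (P ((π i : ℕ)))) := by
            apply Finset.sum_congr rfl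
            intro i _
            rw [hunion, hpre]
        _ = ∑ k : Fin S.card, (C (P ((k : ℕ) + 1)) - C (P (k : ℕ))) := by
            exact Equiv.sum_comp π (fun k => C (P ((k : ℕ) + 1)) - C (P (k : ℕ)))
        _ = ∑ k ∈ Finset.range S.card, (C (P (k + 1)) - C (P k)) :=
            Fin.sum_univ_eq_sum_range (fun k => C (P (k + 1)) - C (P k)) S.card
        _ = C (P S.card) - C (P 0) := Finset.sum_range_sub (fun k => C (P k)) _
        _ = C S - C ∅ := by
            congr 1
            · congr 1
              simp only [hP]
              rw [Finset.filter_true_of_mem (fun j _ => (π j).isLt)]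
              exact Finset.attach_image_val
            · congr 1
              simp [hP]
    simp_rw [h3]
    rw [Finset.sum_const]
    have hcard : Fintype.card ({x // x ∈ S} ≃ Fin S.card) = Nat.factorial S.card := by
      rw [Fintype.card_equiv (Fintype.equivFinOfCardEq (Fintype.card_coe S))]
      rw [Fintype.card_coe]
    rw [Finset.card_univ, hcard, nsmul_eq_mul, ← mul_assoc, one_div,
      inv_mul_cancel₀ (by exact_mod_cast Nat.factorial_ne_zero S.card), one_mul]
  exact ⟨key, fun h0 => by rw [key, h0, sub_zero]⟩
end

section
/- Let N be a finite set, S ⊆ N a nonempty finite subset, and C : Finset N → ℝ a function with C(∅) = 0. For every bijection π : S → {1,…,|S|}, letting S_{i,π} = {j ∈ S : π(j) < π(i)}, one has Σ_{i ∈ S} φ_i(C, S_{i,π} ∪ {i}) = Σ_{∅ ≠ T ⊆ S} α_T · C(T), where α_T = (|S| − |T|)! · (|T| − 1)! / |S|!. In particular, the left-hand side does not depend on the choice of the bijection π. -/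
open Finset

def equivFiberFamily {α β γ : Type*} (f : α → γ) (g : β → γ) :
    {π : α ≃ β // ∀ x, g (π x) = f x} ≃ ∀ c, ({x // f x = c} ≃ {y // g y = c}) where
  toFun π c := Equiv.subtypeEquiv π.1 (fun x => by rw [π.2 x])
  invFun e := ⟨Equiv.ofFiberEquiv e, Equiv.ofFiberEquiv_map e⟩
  left_inv π := Subtype.ext (Equiv.ext fun x => rfl)
  right_inv e := funext fun c => Equiv.ext fun x => Subtype.ext (by
    obtain ⟨x, hx⟩ := x; subst hx; rfl)

lemma card_equiv_fiber {α β γ : Type*} [Fintype α] [Fintype β] [DecidableEq α] [DecidableEq β]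
    [Fintype γ] [DecidableEq γ] (f : α → γ) (g : β → γ)
    (h : ∀ c, Fintype.card {x // f x = c} = Fintype.card {y // g y = c}) :
    Fintype.card {π : α ≃ β // ∀ x, g (π x) = f x} =
      ∏ c, (Fintype.card {x // f x = c}).factorial := by
  rw [Fintype.card_congr (equivFiberFamily f g), Fintype.card_pi]
  exact Finset.prod_congr rfl fun c _ => Fintype.card_equiv (Fintype.equivOfCardEq (h c))

lemma card_eq_sum_fibers {α γ : Type*} [Fintype α] [Fintype γ] [DecidableEq γ] (f : α → γ) :
    Fintype.card α = ∑ c, Fintype.card {x // f x = c} := by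
  rw [← Fintype.card_sigma]
  exact (Fintype.card_congr (Equiv.sigmaFiberEquiv f)).symm

lemma preSet_eq_iff {N : Type*} [DecidableEq N] (U : Finset N) (i : N) (hi : i ∈ U) (A : Finset N) (hA : A ⊆ U.erase i)
    (π : {x // x ∈ U} ≃ Fin U.card) :
    preSet U π ⟨i, hi⟩ = A ↔
      ((π ⟨i, hi⟩ : ℕ) = A.card ∧ ∀ x : {x // x ∈ U}, (π x : ℕ) < A.card ↔ x.val ∈ A) := by
  have hiA : i ∉ A := fun h => (Finset.mem_erase.1 (hA h)).1 rfl
  have hAU : A ⊆ U := hA.trans (Finset.erase_subset _ _)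
  constructor
  · intro hpre
    -- card of the filter set is A.card
    have hcard : (U.attach.filter (fun j => π j < π ⟨i, hi⟩)).card = A.card := by
      rw [← hpre]
      unfold preSet
      rw [Finset.card_image_of_injective _ Subtype.val_injective]
    -- image under π of the filter set is all values < π i
    have himg : (U.attach.filter (fun j => π j < π ⟨i, hi⟩)).image π =
        Finset.univ.filter (fun m => m < π ⟨i, hi⟩) := by
      ext m
      simp only [Finset.mem_image, Finset.mem_filter, Finset.mem_attach, true_and,
        Finset.mem_univ]
      constructor
      · rintro ⟨j, hj, rfl⟩; exact hj
      · intro hm; exact ⟨π.symm m, by simpa using hm, by simp⟩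
    have hval : (Finset.univ.filter (fun m => m < π ⟨i, hi⟩)).card = (π ⟨i, hi⟩ : ℕ) := by
      have : ((Finset.univ.filter (fun m => m < π ⟨i, hi⟩)).image Fin.val) =
          Finset.range (π ⟨i, hi⟩ : ℕ) := by
        ext m
        simp only [Finset.mem_image, Finset.mem_filter, Finset.mem_univ, true_and,
          Finset.mem_range]
        constructor
        · rintro ⟨a, ha, rfl⟩; exact ha
        · intro hm; exact ⟨⟨m, hm.trans (π ⟨i, hi⟩).isLt⟩, hm, rfl⟩
      rw [← Finset.card_image_of_injective _ Fin.val_injective, this, Finset.card_range]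
    have hik : (π ⟨i, hi⟩ : ℕ) = A.card := by
      rw [← hval, ← himg, Finset.card_image_of_injective _ π.injective, hcard]
    refine ⟨hik, fun x => ?_⟩
    constructor
    · intro hx
      have hxlt : π x < π ⟨i, hi⟩ := by rw [Fin.lt_def, hik]; exact hx
      have : x.val ∈ preSet U π ⟨i, hi⟩ := by
        unfold preSet
        exact Finset.mem_image.2 ⟨x, Finset.mem_filter.2 ⟨Finset.mem_attach _ _, hxlt⟩, rfl⟩
      rwa [hpre] at this
    · intro hx
      have : x.val ∈ preSet U π ⟨i, hi⟩ := by rwa [hpre]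
      unfold preSet at this
      obtain ⟨j, hj, hjx⟩ := Finset.mem_image.1 this
      have : j = x := Subtype.ext hjx
      subst this
      have := (Finset.mem_filter.1 hj).2
      rw [Fin.lt_def, hik] at this
      exact this
  · rintro ⟨hik, hlt⟩
    ext a
    unfold preSet
    simp only [Finset.mem_image, Finset.mem_filter, Finset.mem_attach, true_and]
    constructor
    · rintro ⟨j, hj, rfl⟩
      rw [Fin.lt_def, hik] at hj
      exact (hlt j).1 hj
    · intro ha
      refine ⟨⟨a, hAU ha⟩, ?_, rfl⟩
      rw [Fin.lt_def, hik]
      exact (hlt _).2 ha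

lemma count_preSet {N : Type*} [DecidableEq N] (U : Finset N) (i : N) (hi : i ∈ U) (A : Finset N) (hA : A ⊆ U.erase i) :
    (Finset.univ.filter (fun π : {x // x ∈ U} ≃ Fin U.card => preSet U π ⟨i, hi⟩ = A)).card
      = A.card.factorial * (U.card - A.card - 1).factorial := by
  classical
  have hiA : i ∉ A := fun h => (Finset.mem_erase.1 (hA h)).1 rfl
  have hAU : A ⊆ U := hA.trans (Finset.erase_subset _ _)
  have hkn : A.card < U.card := by
    have h1 : A.card ≤ (U.erase i).card := Finset.card_le_card hA
    have h2 : (U.erase i).card = U.card - 1 := Finset.card_erase_of_mem hi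
    have h3 : 1 ≤ U.card := Finset.card_pos.2 ⟨i, hi⟩
    omega
  set n := U.card with hn
  set k := A.card with hk
  set f : {x // x ∈ U} → Fin 3 :=
    fun x => if x.val ∈ A then 0 else if x.val = i then 1 else 2 with hf
  set g : Fin n → Fin 3 :=
    fun m => if (m : ℕ) < k then 0 else if (m : ℕ) = k then 1 else 2 with hg
  have hg0iff : ∀ m : Fin n, g m = 0 ↔ (m : ℕ) < k := by
    intro m; simp only [hg]; split_ifs with h1 h2
    · simp [h1]
    · simp [h1, show (1 : Fin 3) ≠ 0 by decide]
    · simp [h1, show (2 : Fin 3) ≠ 0 by decide]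
  have hg1iff : ∀ m : Fin n, g m = 1 ↔ (m : ℕ) = k := by
    intro m
    simp only [hg]; split_ifs with h1 h2
    · simp only [show (0 : Fin 3) ≠ 1 by decide, false_iff]; omega
    · simp [h2]
    · simp only [show (2 : Fin 3) ≠ 1 by decide, false_iff]; omega
  have hf0iff : ∀ x : {x // x ∈ U}, f x = 0 ↔ x.val ∈ A := by
    intro x; simp only [hf]; split_ifs with h1 h2
    · simp [h1]
    · simp [h1, show (1 : Fin 3) ≠ 0 by decide]
    · simp [h1, show (2 : Fin 3) ≠ 0 by decide]
  have hf1iff : ∀ x : {x // x ∈ U}, f x = 1 ↔ x = (⟨i, hi⟩ : {x // x ∈ U}) := by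
    intro x; simp only [hf]; split_ifs with h1 h2
    · simp only [show (0 : Fin 3) ≠ 1 by decide, false_iff]
      intro hx; subst hx; exact hiA h1
    · simp only [true_iff]; exact Subtype.ext h2
    · simp only [show (2 : Fin 3) ≠ 1 by decide, false_iff]
      intro hx; subst hx; exact h2 rfl
  have hcond : ∀ π : {x // x ∈ U} ≃ Fin n,
      (preSet U π ⟨i, hi⟩ = A ↔ ∀ x, g (π x) = f x) := by
    intro π
    rw [preSet_eq_iff U i hi A hA π]
    constructor
    · rintro ⟨hik, hlt⟩ x
      by_cases h1 : x.val ∈ A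
      · rw [(hf0iff x).2 h1]
        exact (hg0iff _).2 ((hlt x).2 h1)
      · by_cases h2 : x.val = i
        · have hx : x = (⟨i, hi⟩ : {x // x ∈ U}) := Subtype.ext h2
          rw [hx, (hf1iff _).2 rfl]
          exact (hg1iff _).2 hik
        · have hnlt : ¬ ((π x : ℕ) < k) := fun h => h1 ((hlt x).1 h)
          have hne : (π x : ℕ) ≠ k := by
            intro h
            have hpe : π x = π ⟨i, hi⟩ := Fin.ext (h.trans hik.symm)
            exact h2 (congrArg Subtype.val (π.injective hpe))
          simp only [hf, hg]
          rw [if_neg h1, if_neg h2, if_neg hnlt, if_neg hne]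
    · intro h
      have hik : (π ⟨i, hi⟩ : ℕ) = k :=
        (hg1iff _).1 ((h ⟨i, hi⟩).trans ((hf1iff _).2 rfl))
      refine ⟨hik, fun x => ?_⟩
      constructor
      · intro hx
        exact (hf0iff x).1 ((h x).symm.trans ((hg0iff _).2 hx))
      · intro hx
        exact (hg0iff _).1 ((h x).trans ((hf0iff x).2 hx))
  rw [← Fintype.card_subtype, Fintype.card_congr (Equiv.subtypeEquivRight hcond)]
  -- fiber cardinalities
  have hcf0 : Fintype.card {x : {x // x ∈ U} // f x = 0} = k := by
    rw [Fintype.card_congr (Equiv.subtypeEquivRight hf0iff)]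
    rw [Fintype.card_congr (⟨fun x => (⟨x.1.1, x.2⟩ : {a // a ∈ A}),
      fun a => ⟨⟨a.1, hAU a.2⟩, a.2⟩, fun x => Subtype.ext (Subtype.ext rfl),
      fun a => Subtype.ext rfl⟩ : {x : {x // x ∈ U} // x.val ∈ A} ≃ {a // a ∈ A})]
    exact Fintype.card_coe A
  have hcg0 : Fintype.card {m : Fin n // g m = 0} = k := by
    rw [Fintype.card_congr (Equiv.subtypeEquivRight hg0iff)]
    rw [Fintype.card_congr (⟨fun m => (⟨m.1.1, m.2⟩ : Fin k),
      fun j => ⟨⟨j.1, j.2.trans hkn⟩, j.2⟩, fun m => Subtype.ext (Fin.ext rfl),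
      fun j => Fin.ext rfl⟩ : {m : Fin n // (m : ℕ) < k} ≃ Fin k)]
    exact Fintype.card_fin k
  have hcf1 : Fintype.card {x : {x // x ∈ U} // f x = 1} = 1 := by
    rw [Fintype.card_congr (Equiv.subtypeEquivRight hf1iff)]
    exact Fintype.card_subtype_eq _
  have hcg1 : Fintype.card {m : Fin n // g m = 1} = 1 := by
    have : ∀ m : Fin n, g m = 1 ↔ m = ⟨k, hkn⟩ := by
      intro m; rw [hg1iff]; exact ⟨fun h => Fin.ext h, fun h => by rw [h]⟩
    rw [Fintype.card_congr (Equiv.subtypeEquivRight this)]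
    exact Fintype.card_subtype_eq _
  have hsf := card_eq_sum_fibers f
  have hsg := card_eq_sum_fibers g
  rw [Fin.sum_univ_three] at hsf hsg
  rw [Fintype.card_coe U] at hsf
  rw [Fintype.card_fin] at hsg
  have hcf2 : Fintype.card {x : {x // x ∈ U} // f x = 2} = n - k - 1 := by omega
  have hcg2 : Fintype.card {m : Fin n // g m = 2} = n - k - 1 := by omega
  have hfib : ∀ c, Fintype.card {x : {x // x ∈ U} // f x = c} =
      Fintype.card {m : Fin n // g m = c} := by
    intro c
    fin_cases c
    · exact hcf0.trans hcg0.symm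
    · exact hcf1.trans hcg1.symm
    · exact hcf2.trans hcg2.symm
  rw [card_equiv_fiber f g hfib, Fin.prod_univ_three, hcf0, hcf1, hcf2]
  simp [Nat.factorial]
  exact Or.inl rfl

lemma preSet_subset_erase {N : Type*} [DecidableEq N] (U : Finset N) (i : N) (hi : i ∈ U)
    (π : {x // x ∈ U} ≃ Fin U.card) : preSet U π ⟨i, hi⟩ ⊆ U.erase i := by
  intro a ha
  obtain ⟨j, hj, rfl⟩ := Finset.mem_image.1 ha
  have hjlt := (Finset.mem_filter.1 hj).2
  refine Finset.mem_erase.2 ⟨?_, j.2⟩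
  intro hji
  have : j = (⟨i, hi⟩ : {x // x ∈ U}) := Subtype.ext hji
  subst this
  exact lt_irrefl _ hjlt

lemma shapley_eq_sum {N : Type*} [DecidableEq N] (C : Finset N → ℝ) (U : Finset N) (i : N) (hi : i ∈ U) :
    shapley C U i = ∑ A ∈ (U.erase i).powerset,
      ((A.card.factorial : ℝ) * ((U.card - A.card - 1).factorial : ℝ) /
          (U.card.factorial : ℝ)) * (C (A ∪ {i}) - C A) := by
  classical
  rw [shapley, dif_pos hi]
  have hmap : ∀ π : {x // x ∈ U} ≃ Fin U.card, π ∈ Finset.univ →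
      preSet U π ⟨i, hi⟩ ∈ (U.erase i).powerset :=
    fun π _ => Finset.mem_powerset.2 (preSet_subset_erase U i hi π)
  rw [← Finset.sum_fiberwise_of_maps_to' hmap
    (fun A => C (A ∪ {i}) - C A)]
  rw [Finset.mul_sum]
  refine Finset.sum_congr rfl fun A hA => ?_
  rw [Finset.sum_const, count_preSet U i hi A (Finset.mem_powerset.1 hA)]
  ring

noncomputable def pot {N : Type*} [DecidableEq N] (C : Finset N → ℝ) (U : Finset N) : ℝ :=
  ∑ T ∈ U.powerset.filter (fun T => T.Nonempty),
    ((Nat.factorial (U.card - T.card) : ℝ) * (Nat.factorial (T.card - 1) : ℝ) /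
        (Nat.factorial U.card : ℝ)) * C T

lemma arith (a b : ℕ) :
    ((Nat.factorial (b + 1) : ℝ) * (Nat.factorial a) / (Nat.factorial (a + b + 2))) -
      ((Nat.factorial b : ℝ) * (Nat.factorial a) / (Nat.factorial (a + b + 1))) =
    -((Nat.factorial (a + 1) : ℝ) * (Nat.factorial b) / (Nat.factorial (a + b + 2))) := by
  have h1 : (a + b + 2) = (a + b + 1) + 1 := by ring
  rw [h1, Nat.factorial_succ (a+b+1), Nat.factorial_succ b, Nat.factorial_succ a]
  have h2 : (Nat.factorial (a + b + 1) : ℝ) ≠ 0 := Nat.cast_ne_zero.2 (Nat.factorial_ne_zero _)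
  have h3 : ((a : ℝ) + b + 1 + 1) ≠ 0 := by positivity
  push_cast
  field_simp
  ring

lemma shapley_pot {N : Type*} [DecidableEq N] (C : Finset N → ℝ) (hC : C ∅ = 0) (U : Finset N) (i : N) (hi : i ∈ U) :
    shapley C U i = pot C U - pot C (U.erase i) := by
  classical
  have hn1 : 1 ≤ U.card := Finset.card_pos.2 ⟨i, hi⟩
  have hce : (U.erase i).card = U.card - 1 := Finset.card_erase_of_mem hi
  set n := U.card with hn
  set c : Finset N → ℝ := fun A =>
    ((A.card.factorial : ℝ) * ((n - A.card - 1).factorial : ℝ) / (n.factorial : ℝ)) with hcdef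
  set α : Finset N → ℝ := fun T =>
    (((n - T.card).factorial : ℝ) * ((T.card - 1).factorial : ℝ) / (n.factorial : ℝ)) with hαdef
  set P' := (U.erase i).powerset.filter (fun T => T.Nonempty) with hP'
  rw [shapley_eq_sum C U i hi]
  have lhs_eq : ∑ A ∈ (U.erase i).powerset,
      c A * (C (A ∪ {i}) - C A) =
      (∑ A ∈ (U.erase i).powerset, c A * C (A ∪ {i})) -
        ∑ A ∈ (U.erase i).powerset, c A * C A := by
    simp_rw [mul_sub]
    rw [Finset.sum_sub_distrib]
  have hsetnot : (U.powerset.filter (fun T => T.Nonempty)).filter (fun T => ¬ i ∈ T) = P' := by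
    ext T
    simp only [hP', Finset.mem_filter, Finset.mem_powerset, Finset.subset_erase]
    tauto
  have e2 : pot C U = (∑ A ∈ (U.erase i).powerset, c A * C (A ∪ {i})) +
      ∑ T ∈ P', α T * C T := by
    rw [pot, ← Finset.sum_filter_add_sum_filter_not (U.powerset.filter (fun T => T.Nonempty))
      (fun T => i ∈ T), hsetnot]
    congr 1
    refine Finset.sum_nbij' (fun T => T.erase i) (fun A => insert i A) ?_ ?_ ?_ ?_ ?_
    · intro T hT
      simp only [Finset.mem_filter, Finset.mem_powerset] at hT ⊢
      exact Finset.erase_subset_erase i hT.1.1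
    · intro A hA
      simp only [Finset.mem_filter, Finset.mem_powerset, Finset.subset_erase] at hA ⊢
      exact ⟨⟨Finset.insert_subset hi hA.1, Finset.insert_nonempty _ _⟩,
        Finset.mem_insert_self _ _⟩
    · intro T hT
      simp only [Finset.mem_filter] at hT
      exact Finset.insert_erase hT.2
    · intro A hA
      simp only [Finset.mem_powerset, Finset.subset_erase] at hA
      exact Finset.erase_insert hA.2
    · intro T hT
      simp only [Finset.mem_filter, Finset.mem_powerset] at hT
      have hTne : T.Nonempty := hT.1.2
      have hiT : i ∈ T := hT.2
      have ht1 : 1 ≤ T.card := Finset.card_pos.2 hTne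
      have hte : (T.erase i).card = T.card - 1 := Finset.card_erase_of_mem hiT
      have hU : T.erase i ∪ {i} = T := by
        rw [Finset.union_comm, ← Finset.insert_eq, Finset.insert_erase hiT]
      rw [hU, ← hn]
      simp only [hcdef, hte]
      rw [show n - (T.card - 1) - 1 = n - T.card by omega]
      ring
  have e3 : pot C (U.erase i) = (∑ T ∈ P', α T * C T) + ∑ T ∈ P', c T * C T := by
    rw [pot, ← Finset.sum_add_distrib]
    rw [hce]
    refine Finset.sum_congr rfl fun T hT => ?_
    simp only [hP', Finset.mem_filter, Finset.mem_powerset] at hT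
    have ht1 : 1 ≤ T.card := Finset.card_pos.2 hT.2
    have htn : T.card ≤ n - 1 := hce ▸ Finset.card_le_card hT.1
    rw [← add_mul]
    congr 1
    have key := arith (T.card - 1) (n - T.card - 1)
    have h1 : n - T.card - 1 + 1 = n - T.card := by omega
    have h2 : T.card - 1 + (n - T.card - 1) + 2 = n := by omega
    have h3 : T.card - 1 + (n - T.card - 1) + 1 = n - 1 := by omega
    have h4 : T.card - 1 + 1 = T.card := by omega
    have h5 : n - 1 - T.card = n - T.card - 1 := by omega
    rw [h1, h2, h3, h4] at key
    rw [hαdef, hcdef]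
    simp only [h5]
    ring_nf at key ⊢
    linarith
  have e4 : ∑ A ∈ (U.erase i).powerset, c A * C A = ∑ T ∈ P', c T * C T := by
    rw [← Finset.sum_filter_add_sum_filter_not ((U.erase i).powerset) (fun A => A.Nonempty)]
    rw [← hP']
    have : ∑ A ∈ (U.erase i).powerset.filter (fun A => ¬ A.Nonempty), c A * C A = 0 := by
      refine Finset.sum_eq_zero fun A hA => ?_
      simp only [Finset.mem_filter, Finset.not_nonempty_iff_eq_empty] at hA
      rw [hA.2, hC, mul_zero]
    rw [this, add_zero]
  rw [lhs_eq, e2, e3, e4]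
  ring

set_option maxHeartbeats 1000000 in
/-- For every bijection `π : S → {1,…,|S|}`, one has
`Σ_{i ∈ S} φ_i(C, S_{i,π} ∪ {i}) = Σ_{∅ ≠ T ⊆ S} α_T · C(T)` with
`α_T = (|S|-|T|)!(|T|-1)!/|S|!`; in particular the left-hand side is
independent of `π`. -/
theorem shapley_potential_coefficients {N : Type*} [DecidableEq N] [Fintype N]
    (S : Finset N) (hS : S.Nonempty) (C : Finset N → ℝ) (hC : C ∅ = 0)
    (π : {x // x ∈ S} ≃ Fin S.card) :
    ∑ i ∈ S.attach, shapley C (preSet S π i ∪ {i.val}) i.val =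
      ∑ T ∈ S.powerset.filter (fun T => T.Nonempty),
        ((Nat.factorial (S.card - T.card) : ℝ) * (Nat.factorial (T.card - 1) : ℝ) /
            (Nat.factorial S.card : ℝ)) * C T := by
  classical
  set V : ℕ → Finset N :=
    fun k => (S.attach.filter (fun j => (π j : ℕ) < k)).image Subtype.val with hV
  have hpre : ∀ i : {x // x ∈ S}, preSet S π i = V ((π i : ℕ)) := by
    intro i
    unfold preSet
    rw [hV]
    congr 1
  have hpre1 : ∀ i : {x // x ∈ S}, preSet S π i ∪ {i.val} = V ((π i : ℕ) + 1) := by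
    intro i
    ext a
    simp only [hV, preSet, Finset.mem_union, Finset.mem_singleton, Finset.mem_image,
      Finset.mem_filter, Finset.mem_attach, true_and]
    constructor
    · rintro (⟨j, hj, rfl⟩ | rfl)
      · exact ⟨j, by rw [Fin.lt_def] at hj; omega, rfl⟩
      · exact ⟨i, by omega, rfl⟩
    · rintro ⟨j, hj, rfl⟩
      by_cases h : (π j : ℕ) < (π i : ℕ)
      · exact Or.inl ⟨j, by rwa [Fin.lt_def], rfl⟩
      · have : π j = π i := Fin.ext (by omega)
        have : j = i := π.injective this
        subst this
        exact Or.inr rfl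
  have hmem : ∀ i : {x // x ∈ S}, i.val ∈ preSet S π i ∪ {i.val} := fun i =>
    Finset.mem_union_right _ (Finset.mem_singleton_self _)
  have herase : ∀ i : {x // x ∈ S}, (preSet S π i ∪ {i.val}).erase i.val = preSet S π i := by
    intro i
    have hni : i.val ∉ preSet S π i := by
      intro h
      obtain ⟨j, hj, hjv⟩ := Finset.mem_image.1 h
      have hji : j = i := Subtype.ext hjv
      subst hji
      exact lt_irrefl _ (Finset.mem_filter.1 hj).2
    rw [Finset.union_comm, ← Finset.insert_eq, Finset.erase_insert hni]
  have hVtop : V S.card = S := by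
    ext a
    simp only [hV, Finset.mem_image, Finset.mem_filter, Finset.mem_attach, true_and]
    constructor
    · rintro ⟨j, _, rfl⟩; exact j.2
    · intro ha; exact ⟨⟨a, ha⟩, (π _).isLt, rfl⟩
  have hVbot : V 0 = ∅ := by
    simp [hV]
  have hpot0 : pot C (∅ : Finset N) = 0 := by
    simp [pot, Finset.powerset_empty, Finset.filter_singleton, Finset.not_nonempty_empty]
  calc ∑ i ∈ S.attach, shapley C (preSet S π i ∪ {i.val}) i.val
      = ∑ i ∈ S.attach, (pot C (V ((π i : ℕ) + 1)) - pot C (V ((π i : ℕ)))) := by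
        refine Finset.sum_congr rfl fun i _ => ?_
        rw [shapley_pot C hC _ i.val (hmem i), herase i, hpre1 i, hpre i]
    _ = ∑ k : Fin S.card, (pot C (V ((k : ℕ) + 1)) - pot C (V (k : ℕ))) := by
        rw [← Finset.univ_eq_attach]
        exact Fintype.sum_equiv π _ _ (fun i => rfl)
    _ = ∑ k ∈ Finset.range S.card, (pot C (V (k + 1)) - pot C (V k)) :=
        Fin.sum_univ_eq_sum_range (fun k => pot C (V (k + 1)) - pot C (V k)) S.card
    _ = pot C (V S.card) - pot C (V 0) := Finset.sum_range_sub (fun k => pot C (V k)) S.card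
    _ = pot C S := by rw [hVtop, hVbot, hpot0, sub_zero]
    _ = _ := rfl
end
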